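/- Let h: [n] → [n] be a Hessenberg function and 1 ≤ j ≤ n. Then the two ideals ⟨g_{h(1),1},...,g_{h(j-1),j-1}, f_{h(j),j}, f_{h(j+1),j+1},...,f_{h(n),n}⟩ and ⟨g_{h(1),1},...,g_{h(j-1),j-1}, x_j · g_{h(j),j}, f_{h(j+1),j+1},...,f_{h(n),n}⟩ of ℚ[x_1,...,x_n] are equal. -/

import Mathlib

open MvPolynomial

/-- The variable `x_m` (1-indexed) in `ℚ[x_1,…,x_n]`. -/
noncomputable def xv (n : ℕ) (m : ℕ) : MvPolynomial (Fin n) ℚ :=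
  if h : m - 1 < n then X ⟨m - 1, h⟩ else 0

/-- `f_{i,j} = ∑_{k=1}^{j} (∏_{ℓ=j+1}^{i} (x_k - x_ℓ)) x_k`. -/
noncomputable def fpoly (n i j : ℕ) : MvPolynomial (Fin n) ℚ :=
  ∑ k ∈ Finset.Icc 1 j, (∏ l ∈ Finset.Icc (j+1) i, (xv n k - xv n l)) * xv n k

/-- `g_{i,j} = ∑_{k=1}^{j} ∏_{ℓ=j+1}^{i} (x_k - x_ℓ)`. -/
noncomputable def gpoly (n i j : ℕ) : MvPolynomial (Fin n) ℚ :=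
  ∑ k ∈ Finset.Icc 1 j, ∏ l ∈ Finset.Icc (j+1) i, (xv n k - xv n l)

/-- `h` is a Hessenberg function on `{1,…,n}`. -/
def IsHessenberg (n : ℕ) (h : ℕ → ℕ) : Prop :=
  (∀ i, 1 ≤ i → i ≤ n → i ≤ h i ∧ h i ≤ n) ∧
  (∀ i, 1 ≤ i → i < n → h i ≤ h (i + 1))

lemma gpoly_zero (n i : ℕ) : gpoly n i 0 = 0 := by simp [gpoly]

lemma icc_top (a b : ℕ) (h : a ≤ b + 1) :
    Finset.Icc a (b + 1) = insert (b + 1) (Finset.Icc a b) := by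
  ext x; simp [Finset.mem_Icc, Finset.mem_insert]; omega

lemma icc_bot (a b : ℕ) (h : a ≤ b) :
    Finset.Icc a b = insert a (Finset.Icc (a + 1) b) := by
  ext x; simp [Finset.mem_Icc, Finset.mem_insert]; omega

/-- `∑_{m=1}^{k+1} (x_m - x_{k+1}) ∏_{l=k+2}^{i} (x_m - x_l) = g_{i,k}`. -/
lemma lemC (n k i : ℕ) (hki : k + 1 ≤ i) :
    ∑ m ∈ Finset.Icc 1 (k+1),
        (xv n m - xv n (k+1)) * ∏ l ∈ Finset.Icc (k+2) i, (xv n m - xv n l)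
      = gpoly n i k := by
  rw [icc_top 1 k (by omega), Finset.sum_insert (by simp)]
  rw [sub_self, zero_mul, zero_add, gpoly]
  apply Finset.sum_congr rfl
  intro m hm
  rw [icc_bot (k+1) i hki, Finset.prod_insert (by simp)]

/-- `f_{i,j} = x_j g_{i,j} + g_{i,j-1}`. -/
lemma lemA (n k i : ℕ) (hki : k + 1 ≤ i) :
    fpoly n i (k+1) = xv n (k+1) * gpoly n i (k+1) + gpoly n i k := by
  rw [← lemC n k i hki, fpoly, gpoly, Finset.mul_sum, ← Finset.sum_add_distrib]
  apply Finset.sum_congr rfl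
  intro m hm
  ring

/-- `g_{i+1,j} = (x_j - x_{i+1}) g_{i,j} + g_{i,j-1}`. -/
lemma lemB (n k i : ℕ) (hki : k + 1 ≤ i) :
    gpoly n (i+1) (k+1)
      = (xv n (k+1) - xv n (i+1)) * gpoly n i (k+1) + gpoly n i k := by
  rw [← lemC n k i hki]
  rw [gpoly, gpoly, Finset.mul_sum, ← Finset.sum_add_distrib]
  apply Finset.sum_congr rfl
  intro m hm
  rw [icc_top (k+2) i (by omega), Finset.prod_insert (by simp)]
  ring

/-- For `i ≥ h(k)`, `g_{i,k}` lies in the ideal generated by `g_{h(1),1},…,g_{h(k),k}`. -/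
lemma memG (n : ℕ) (h : ℕ → ℕ) (hh : IsHessenberg n h) :
    ∀ k, k ≤ n → ∀ i, (1 ≤ k → h k ≤ i) →
      gpoly n i k ∈ Ideal.span ((fun m => gpoly n (h m) m) '' Set.Icc 1 k) := by
  intro k
  induction k with
  | zero => intro _ i _; rw [gpoly_zero]; exact Ideal.zero_mem _
  | succ k ih =>
    intro hkn i hi
    have hi' : h (k+1) ≤ i := hi (by omega)
    have hk1 : k + 1 ≤ h (k + 1) := (hh.1 (k+1) (by omega) hkn).1
    clear hi
    induction i, hi' using Nat.le_induction with
    | base =>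
      exact Ideal.subset_span ⟨k + 1, ⟨by omega, le_refl _⟩, rfl⟩
    | succ i hi ihi =>
      rw [lemB n k i (by omega)]
      refine add_mem (Ideal.mul_mem_left _ _ ihi) ?_
      have hsub : ((fun m => gpoly n (h m) m) '' Set.Icc 1 k)
          ⊆ ((fun m => gpoly n (h m) m) '' Set.Icc 1 (k+1)) :=
        Set.image_mono (Set.Icc_subset_Icc_right (by omega))
      refine Ideal.span_mono hsub (ih (by omega) i ?_)
      intro h1k
      exact le_trans (hh.2 k h1k (by omega)) hi

theorem ideal_eq_replace_f_by_x_mul_g (n : ℕ) (h : ℕ → ℕ) (hh : IsHessenberg n h)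
    (j : ℕ) (hj1 : 1 ≤ j) (hjn : j ≤ n) :
    Ideal.span
        (((fun m => gpoly n (h m) m) '' Set.Icc 1 (j - 1)) ∪
          {fpoly n (h j) j} ∪
          ((fun m => fpoly n (h m) m) '' Set.Icc (j + 1) n)) =
    Ideal.span
        (((fun m => gpoly n (h m) m) '' Set.Icc 1 (j - 1)) ∪
          {xv n j * gpoly n (h j) j} ∪
          ((fun m => fpoly n (h m) m) '' Set.Icc (j + 1) n)) := by
  obtain ⟨k, rfl⟩ : ∃ k, j = k + 1 := ⟨j - 1, by omega⟩
  have hk : k + 1 - 1 = k := by omega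
  rw [hk]
  have hkh : k + 1 ≤ h (k + 1) := (hh.1 (k+1) (by omega) hjn).1
  set A : Set (MvPolynomial (Fin n) ℚ) := (fun m => gpoly n (h m) m) '' Set.Icc 1 k with hA
  set B : Set (MvPolynomial (Fin n) ℚ) := (fun m => fpoly n (h m) m) '' Set.Icc (k + 2) n with hB
  have hgmem1 : gpoly n (h (k+1)) k ∈ Ideal.span A := by
    apply memG n h hh k (by omega)
    intro h1k
    exact le_trans (hh.2 k h1k (by omega)) (le_refl _)
  have hfx : fpoly n (h (k+1)) (k+1)
      = xv n (k+1) * gpoly n (h (k+1)) (k+1) + gpoly n (h (k+1)) k :=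
    lemA n k (h (k+1)) hkh
  apply le_antisymm <;> rw [Ideal.span_le] <;> intro p hp
  · rcases hp with (hp | hp) | hp
    · exact Ideal.subset_span (Or.inl (Or.inl hp))
    · rcases hp with rfl
      rw [hfx]
      refine add_mem (Ideal.subset_span (Or.inl (Or.inr rfl))) ?_
      exact Ideal.span_mono (by intro x hx; exact Or.inl (Or.inl hx)) hgmem1
    · exact Ideal.subset_span (Or.inr hp)
  · rcases hp with (hp | hp) | hp
    · exact Ideal.subset_span (Or.inl (Or.inl hp))
    · rcases hp with rfl
      have : xv n (k+1) * gpoly n (h (k+1)) (k+1)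
          = fpoly n (h (k+1)) (k+1) - gpoly n (h (k+1)) k := by rw [hfx]; ring
      rw [this]
      refine sub_mem (Ideal.subset_span (Or.inl (Or.inr rfl))) ?_
      exact Ideal.span_mono (by intro x hx; exact Or.inl (Or.inl hx)) hgmem1
    · exact Ideal.subset_span (Or.inr hp)
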